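/- Let n ≥ 2, let Σ be a real n×2 matrix of rank 2, and let η ∈ ℝ². Then there exists π* ∈ ℝⁿ with Σᵀπ* = η such that π* has at most 2 nonzero coordinates and ‖π*‖₁ ≤ ‖π‖₁ for every π ∈ ℝⁿ with Σᵀπ = η. (Sparse-optimality part of Proposition 1: an optimal strategy for the risk-exposure-minimization problem exists whose number of non-zero allocations is at most 2.) -/

import Mathlib

open Matrix Finset

private lemma abs_add_abs_sub {a b : ℝ} (h : |b| ≤ |a|) : |a + b| + |a - b| = 2 * |a| := by
  rcases le_or_gt 0 a with ha | ha
  · rw [abs_of_nonneg ha] at h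
    have hb := abs_le.mp h
    rw [abs_of_nonneg ha, abs_of_nonneg (by linarith), abs_of_nonneg (by linarith)]
    ring
  · rw [abs_of_neg ha] at h
    have hb := abs_le.mp h
    rw [abs_of_neg ha, abs_of_nonpos (by linarith), abs_of_nonpos (by linarith)]
    ring

/-- Sparse-optimality part of Proposition 1: for an n×2 exposure matrix of rank 2,
there is an ℓ1-minimal feasible allocation with at most 2 nonzero coordinates. -/
theorem sparse_optimal_two (n : ℕ) (hn : 2 ≤ n) (A : Matrix (Fin n) (Fin 2) ℝ)
    (hrank : A.rank = 2) (η : Fin 2 → ℝ) :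
    ∃ πstar : Fin n → ℝ, Aᵀ *ᵥ πstar = η ∧ {i | πstar i ≠ 0}.ncard ≤ 2 ∧
      ∀ π : Fin n → ℝ, Aᵀ *ᵥ π = η → ∑ i, |πstar i| ≤ ∑ i, |π i| := by
  classical
  set φ : (Fin n → ℝ) → ℝ := fun π => ∑ i, |π i| with hφdef
  -- Step 1: feasible set is nonempty since Aᵀ is surjective (rank 2).
  have hsurj : Function.Surjective (Aᵀ.mulVecLin) := by
    rw [← LinearMap.range_eq_top]
    apply Submodule.eq_top_of_finrank_eq
    have h2 : Aᵀ.rank = 2 := by rw [Matrix.rank_transpose, hrank]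
    rw [Matrix.rank] at h2
    simp [h2]
  obtain ⟨π₀, hπ₀⟩ := hsurj η
  rw [Matrix.mulVecLin_apply] at hπ₀
  set C : Set (Fin n → ℝ) := {π | Aᵀ *ᵥ π = η} with hCdef
  have hπ₀C : π₀ ∈ C := hπ₀
  -- Step 2: existence of an ℓ1-minimizer on C.
  have hφ_cont : Continuous φ := by
    apply continuous_finset_sum
    intro i _
    exact (continuous_apply i).abs
  have hC_closed : IsClosed C := by
    have hcont : Continuous fun π : Fin n → ℝ => Aᵀ *ᵥ π := by
      exact (Aᵀ.mulVecLin).continuous_of_finiteDimensional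
    have : C = (fun π : Fin n → ℝ => Aᵀ *ᵥ π) ⁻¹' {η} := by
      ext π; simp [hCdef]
    rw [this]
    exact isClosed_singleton.preimage hcont
  set K : Set (Fin n → ℝ) := C ∩ {π | φ π ≤ φ π₀} with hKdef
  have hK_closed : IsClosed K :=
    hC_closed.inter (isClosed_le hφ_cont continuous_const)
  have hφ_nonneg : ∀ π, (0:ℝ) ≤ φ π := fun π =>
    Finset.sum_nonneg fun i _ => abs_nonneg _
  have hK_sub : K ⊆ Metric.closedBall 0 (φ π₀) := by
    intro π hπ
    rw [Metric.mem_closedBall, dist_zero_right]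
    rw [pi_norm_le_iff_of_nonneg (le_trans (hφ_nonneg π) hπ.2)]
    intro i
    calc ‖π i‖ = |π i| := rfl
      _ ≤ φ π := Finset.single_le_sum (fun j _ => abs_nonneg (π j)) (Finset.mem_univ i)
      _ ≤ φ π₀ := hπ.2
  have hK_compact : IsCompact K :=
    (isCompact_closedBall (0 : Fin n → ℝ) (φ π₀)).of_isClosed_subset hK_closed hK_sub
  have hK_ne : K.Nonempty := ⟨π₀, hπ₀C, le_refl (φ π₀)⟩
  obtain ⟨πm, hπmK, hπm_min⟩ := hK_compact.exists_isMinOn hK_ne hφ_cont.continuousOn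
  -- πm is a global minimizer on C
  have hGoodπm : πm ∈ C ∧ ∀ π ∈ C, φ πm ≤ φ π := by
    refine ⟨hπmK.1, fun π hπ => ?_⟩
    rcases le_or_gt (φ π) (φ π₀) with h | h
    · exact hπm_min ⟨hπ, h⟩
    · exact le_trans (hπm_min ⟨hπ₀C, le_refl (φ π₀)⟩) (le_of_lt h)
  set Good : (Fin n → ℝ) → Prop := fun π => π ∈ C ∧ ∀ π' ∈ C, φ π ≤ φ π' with hGooddef
  -- Step 3: take a minimizer with minimal support cardinality.
  have hP : ∃ m : ℕ, ∃ π, Good π ∧ {i | π i ≠ 0}.ncard ≤ m :=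
    ⟨{i | πm i ≠ 0}.ncard, πm, hGoodπm, le_refl _⟩
  set k := Nat.find hP with hkdef
  obtain ⟨πs, hπs_good, hπs_card⟩ := Nat.find_spec hP
  refine ⟨πs, hπs_good.1, ?_, fun π hπ => hπs_good.2 π hπ⟩
  -- Step 4: show the support has at most 2 elements.
  by_contra h3
  push_neg at h3
  set S : Set (Fin n) := {i | πs i ≠ 0} with hSdef
  have hSfin : S.Finite := Set.toFinite S
  obtain ⟨i, hi, j, hj, kk, hkk, hij, hik, hjk⟩ := (Set.two_lt_ncard hSfin).mp h3
  -- three rows of A are linearly dependent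
  have hnli : ¬ LinearIndependent ℝ ![A i, A j, A kk] := by
    intro h
    have := h.fintype_card_le_finrank
    simp at this
  obtain ⟨g, hg, l, hl⟩ := Fintype.not_linearIndependent_iff.mp hnli
  set d : Fin n → ℝ := fun m =>
    (if m = i then g 0 else 0) + (if m = j then g 1 else 0) + (if m = kk then g 2 else 0)
    with hddef
  have hdi : d i = g 0 := by simp [hddef, hij, hik]
  have hdj : d j = g 1 := by simp [hddef, hij.symm, hjk]
  have hdk : d kk = g 2 := by simp [hddef, hik.symm, hjk.symm]
  have hd_supp : ∀ m, d m ≠ 0 → m ∈ S := by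
    intro m hm
    by_contra hmS
    rcases eq_or_ne m i with rfl | hmi
    · exact hmS hi
    rcases eq_or_ne m j with rfl | hmj
    · exact hmS hj
    rcases eq_or_ne m kk with rfl | hmk
    · exact hmS hkk
    exact hm (by simp [hddef, hmi, hmj, hmk])
  have hd_triple : ∀ m, m ≠ i → m ≠ j → m ≠ kk → d m = 0 := by
    intro m h1 h2 h3'
    simp [hddef, h1, h2, h3']
  -- Aᵀ *ᵥ d = 0
  have hAd : Aᵀ *ᵥ d = 0 := by
    funext r
    have hg' := congrFun hg r
    simp [Fin.sum_univ_three] at hg'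
    simp only [Matrix.mulVec, dotProduct, Matrix.transpose_apply, hddef,
      mul_add, mul_ite, mul_zero, Finset.sum_add_distrib, Finset.sum_ite_eq',
      Finset.mem_univ, if_true, Pi.zero_apply]
    linarith [hg']
  -- choose the coordinate to zero out
  have hTne : (Finset.univ.filter fun m => d m ≠ 0).Nonempty := by
    fin_cases l
    · exact ⟨i, by simp [hdi]; exact hl⟩
    · exact ⟨j, by simp [hdj]; exact hl⟩
    · exact ⟨kk, by simp [hdk]; exact hl⟩
  obtain ⟨m0, hm0T, hm0_min⟩ :=
    (Finset.univ.filter fun m => d m ≠ 0).exists_min_image (fun m => |πs m| / |d m|) hTne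
  have hdm0 : d m0 ≠ 0 := (Finset.mem_filter.mp hm0T).2
  set t : ℝ := -(πs m0 / d m0) with htdef
  -- key bound
  have hbound : ∀ m, |t * d m| ≤ |πs m| := by
    intro m
    rcases eq_or_ne (d m) 0 with h0 | h0
    · simp [h0]
    · have hmT : m ∈ Finset.univ.filter fun m => d m ≠ 0 := Finset.mem_filter.mpr ⟨Finset.mem_univ m, h0⟩
      have hmin := hm0_min m hmT
      have hdm' : |d m| ≠ 0 := abs_ne_zero.mpr h0
      have ht' : |t| = |πs m0| / |d m0| := by
        rw [htdef, abs_neg, abs_div]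
      calc |t * d m| = |t| * |d m| := abs_mul _ _
        _ = (|πs m0| / |d m0|) * |d m| := by rw [ht']
        _ ≤ (|πs m| / |d m|) * |d m| := by
            apply mul_le_mul_of_nonneg_right hmin (abs_nonneg _)
        _ = |πs m| := div_mul_cancel₀ _ hdm'
  set π₁ : Fin n → ℝ := πs + t • d with hπ₁def
  set π₂ : Fin n → ℝ := πs - t • d with hπ₂def
  have hπ₁C : π₁ ∈ C := by
    show Aᵀ *ᵥ π₁ = η
    rw [hπ₁def, Matrix.mulVec_add, Matrix.mulVec_smul, hAd, hπs_good.1]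
    simp
  have hπ₂C : π₂ ∈ C := by
    show Aᵀ *ᵥ π₂ = η
    rw [hπ₂def, sub_eq_add_neg, Matrix.mulVec_add, ← smul_neg, Matrix.mulVec_smul]
    rw [show -d = (-1 : ℝ) • d by simp, Matrix.mulVec_smul, hAd, hπs_good.1]
    simp
  -- sum identity
  have hsum : φ π₁ + φ π₂ = 2 * φ πs := by
    rw [hφdef]
    simp only [← Finset.sum_add_distrib, ← Finset.mul_sum]
    rw [Finset.mul_sum]
    apply Finset.sum_congr rfl
    intro m _
    have := abs_add_abs_sub (hbound m)
    simpa [hπ₁def, hπ₂def] using this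
  have h1 : φ πs ≤ φ π₁ := hπs_good.2 π₁ hπ₁C
  have h2 : φ πs ≤ φ π₂ := hπs_good.2 π₂ hπ₂C
  have hφeq : φ π₁ = φ πs := by linarith
  have hπ₁_good : Good π₁ := ⟨hπ₁C, fun π' hπ' => hφeq ▸ hπs_good.2 π' hπ'⟩
  -- support of π₁ is strictly smaller
  have hm0S : m0 ∈ S := hd_supp m0 hdm0
  have hπ₁m0 : π₁ m0 = 0 := by
    simp only [hπ₁def, Pi.add_apply, Pi.smul_apply, smul_eq_mul, htdef]
    field_simp
    ring
  have hsupp₁ : {i | π₁ i ≠ 0} ⊆ S \ {m0} := by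
    intro m hm
    simp only [Set.mem_setOf_eq] at hm
    refine ⟨?_, ?_⟩
    · by_contra hmS
      have hπsm : πs m = 0 := not_not.mp hmS
      have hdm : d m = 0 := by
        by_contra hdm
        exact hmS (hd_supp m hdm)
      apply hm
      simp [hπ₁def, hπsm, hdm]
    · intro hmm0
      rw [Set.mem_singleton_iff] at hmm0
      subst hmm0
      exact hm hπ₁m0
  have hcard₁ : {i | π₁ i ≠ 0}.ncard < S.ncard :=
    lt_of_le_of_lt (Set.ncard_le_ncard hsupp₁ (hSfin.diff))
      (Set.ncard_diff_singleton_lt_of_mem hm0S hSfin)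
  have hkle : k ≤ {i | π₁ i ≠ 0}.ncard :=
    Nat.find_min' hP ⟨π₁, hπ₁_good, le_refl _⟩
  omega
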